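/- arXiv:2311.05731 — 5 statements merged into one kernel-verified Lean document; each statement's English description precedes it below -/
import Mathlib

section
/- Let s : ℕ → List ℕ be given by s(0) = [0,1] and s(n) = [0, n−1, n+1] for n ≥ 1, extended to words (lists) by concatenation of the images of the letters. Then for every n ≥ 1, the word sⁿ(0) (the n-fold iterate applied to the single letter 0) begins with the letter 0 and contains the letter n. -/
/-- The restriction to the integer letters of the substitution `ϱ_∞` on the one-point
compactification of `ℕ`: `0 ↦ 0 1` and `n ↦ 0 (n-1) (n+1)` for `n ≥ 1`. -/
def sInfty : ℕ → List ℕ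
  | 0 => [0, 1]
  | (n + 1) => [0, n, n + 2]

/-- **Combinatorial primitivity of `ϱ_∞`.**  For every `n ≥ 1`, the word `sⁿ(0)`, obtained by
iterating the substitution `s = ϱ_∞` (extended to words by concatenation) `n` times on the
single letter `0`, begins with the letter `0` and contains the letter `n`. -/
theorem sInfty_iterate_head_mem (n : ℕ) (hn : 1 ≤ n) :
    ((fun w : List ℕ => w.flatMap sInfty)^[n] [0]).head? = some 0 ∧
      n ∈ (fun w : List ℕ => w.flatMap sInfty)^[n] [0] := by
  set F : List ℕ → List ℕ := fun w => w.flatMap sInfty with hF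
  have hhead : ∀ m, ∃ t, F^[m] [0] = 0 :: t := by
    intro m
    induction m with
    | zero => exact ⟨[], rfl⟩
    | succ k ih =>
      obtain ⟨t, ht⟩ := ih
      refine ⟨1 :: t.flatMap sInfty, ?_⟩
      rw [Function.iterate_succ_apply', ht]
      rfl
  have hmem : ∀ m, 1 ≤ m → m ∈ F^[m] [0] := by
    intro m hm
    induction m with
    | zero => omega
    | succ k ih =>
      rcases Nat.eq_or_lt_of_le hm with h | h
      · simp [← h, hF, List.flatMap, sInfty]
      · have hk : 1 ≤ k := by omega
        have hkmem := ih hk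
        rw [Function.iterate_succ_apply']
        rw [hF]
        refine List.mem_flatMap.2 ⟨k, hkmem, ?_⟩
        match k, hk with
        | j + 1, _ => simp [sInfty]
  obtain ⟨t, ht⟩ := hhead n
  exact ⟨by rw [ht]; rfl, hmem n hn⟩
end

section
/- Let m : ℕ → ℕ be bounded, let μ ∈ (0,1) satisfy Σ_{i=0}^∞ m_i μ^{i+1} = 1, and set λ = μ + 1/μ. Define L(n) = μⁿ + Σ_{j=1}^{n} Σ_{i=j}^{∞} m_i μ^{i+n+1−2j} for n ∈ ℕ. Then L(0) = 1, λ·L(0) = m₀·L(0) + L(1), and λ·L(n) = m_n·L(0) + L(n−1) + L(n+1) for every n ≥ 1. (That is, L is a natural length function for ϱ_m with inflation factor λ.) -/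
/-- **The natural length function of `ϱ_m`.**
Let `m : ℕ → ℕ` be bounded, let `μ ∈ (0,1)` satisfy `Σ_{i=0}^∞ m_i μ^{i+1} = 1`, and set
`λ = μ + 1/μ`.  Define `L(n) = μⁿ + Σ_{j=1}^{n} Σ_{i=j}^{∞} m_i μ^{i+n+1-2j}` (the inner sum is
written below with the reindexing `i = j + i'`, so the exponent `i+n+1-2j` becomes
`i' + (n+1-j)`).  Then `L(0) = 1`, `λ·L(0) = m₀·L(0) + L(1)`, and
`λ·L(n) = m_n·L(0) + L(n-1) + L(n+1)` for every `n ≥ 1`; that is, `L` is a natural length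
function for `ϱ_m` (which maps `0 ↦ 0^{m₀} 1` and `n ↦ 0^{m_n} (n-1)(n+1)`) with inflation
factor `λ`. -/
theorem natural_length_function_rho_m (m : ℕ → ℕ) (C : ℕ) (hm : ∀ i, m i ≤ C)
    (μ : ℝ) (hμ : μ ∈ Set.Ioo (0 : ℝ) 1)
    (hsum : ∑' i : ℕ, (m i : ℝ) * μ ^ (i + 1) = 1)
    (lam : ℝ) (hlam : lam = μ + 1 / μ)
    (L : ℕ → ℝ)
    (hL : ∀ n : ℕ, L n =
      μ ^ n + ∑ j ∈ Finset.Icc 1 n, ∑' i : ℕ, (m (j + i) : ℝ) * μ ^ (i + (n + 1 - j))) :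
    L 0 = 1 ∧ lam * L 0 = (m 0 : ℝ) * L 0 + L 1 ∧
      ∀ n : ℕ, 1 ≤ n → lam * L n = (m n : ℝ) * L 0 + L (n - 1) + L (n + 1) := by
  obtain ⟨hμ0, hμ1⟩ := hμ
  have hμne : μ ≠ 0 := ne_of_gt hμ0
  have hsummable : ∀ j : ℕ, Summable (fun i : ℕ => (m (j + i) : ℝ) * μ ^ i) := by
    intro j
    refine Summable.of_nonneg_of_le (fun i => by positivity) (fun i => ?_)
      ((summable_geometric_of_lt_one hμ0.le hμ1).mul_left (C : ℝ))
    exact mul_le_mul_of_nonneg_right (by exact_mod_cast hm (j + i)) (by positivity)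
  set T : ℕ → ℝ := fun j => ∑' i : ℕ, (m (j + i) : ℝ) * μ ^ i with hTdef
  have hT : ∀ j, T j = (m j : ℝ) + μ * T (j + 1) := by
    intro j
    have h0 := Summable.tsum_eq_zero_add (hsummable j)
    have h1 : (∑' i : ℕ, (m (j + (i + 1)) : ℝ) * μ ^ (i + 1))
        = μ * T (j + 1) := by
      rw [hTdef]
      rw [← tsum_mul_left]
      congr 1; funext i
      have : j + (i + 1) = j + 1 + i := by omega
      rw [this]; ring
    calc T j = (m (j + 0) : ℝ) * μ ^ 0 + ∑' i : ℕ, (m (j + (i + 1)) : ℝ) * μ ^ (i + 1) := h0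
    _ = (m j : ℝ) + μ * T (j + 1) := by rw [h1]; simp
  have hT0 : μ * T 0 = 1 := by
    rw [← hsum, hTdef, ← tsum_mul_left]
    congr 1; funext i
    simp; ring
  set A : ℕ → ℝ := fun n => ∑ j ∈ Finset.Icc 1 n, T j * μ ^ (n + 1 - j) with hAdef
  have hL' : ∀ n, L n = μ ^ n + A n := by
    intro n
    rw [hL n, hAdef]
    congr 1
    apply Finset.sum_congr rfl
    intro j hj
    rw [← tsum_mul_right]
    congr 1; funext i
    rw [pow_add]; ring
  have hA : ∀ n, A (n + 1) = μ * A n + T (n + 1) * μ := by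
    intro n
    rw [hAdef]
    simp only
    rw [Finset.sum_Icc_succ_top (by omega : 1 ≤ n + 1)]
    congr 1
    · rw [Finset.mul_sum]
      apply Finset.sum_congr rfl
      intro j hj
      have hjn : j ≤ n := (Finset.mem_Icc.mp hj).2
      have : n + 1 + 1 - j = (n + 1 - j) + 1 := by omega
      rw [this, pow_succ]; ring
    · congr 1
      have : n + 1 + 1 - (n + 1) = 1 := by omega
      rw [this, pow_one]
  have hL0 : L 0 = 1 := by
    rw [hL' 0]
    simp [hAdef]
  refine ⟨hL0, ?_, ?_⟩
  · rw [hL0, hL' 1, hlam]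
    have hA1 : A 1 = T 1 * μ := by
      have := hA 0
      simpa [hAdef] using this
    rw [hA1]
    have h2 := hT 0
    field_simp
    nlinarith [hT0, hT 0]
  · rintro n hn
    obtain ⟨k, rfl⟩ : ∃ k, n = k + 1 := ⟨n - 1, by omega⟩
    simp only [Nat.add_sub_cancel]
    rw [hL0, hlam, hL' (k + 1), hL' k, hL' (k + 2)]
    have e1 := hA k
    have e2 := hA (k + 1)
    have e3 := hT (k + 1)
    have hpow : μ ^ (k + 1) = μ ^ k * μ := pow_succ μ k
    have hpow2 : μ ^ (k + 2) = μ ^ k * μ * μ := by rw [pow_succ, pow_succ]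
    field_simp
    nlinarith [e1, e2, e3, sq_nonneg μ]
end

section
/- The unique μ ∈ (0,1) satisfying Σ_{i=0}^∞ μ^{i+1} = 1 is μ = 1/2, so the inflation factor of the substitution ϱ_∞ is λ = μ + 1/μ = 5/2. Moreover 5/2 is not an algebraic integer (it is not integral over ℤ); in particular, λ = 5/2 cannot be the inflation factor of any primitive substitution on a finite alphabet. -/
open Polynomial Matrix in
lemma aux_eval_charpoly {n : ℕ} (B : Matrix (Fin n) (Fin n) ℝ) (r : ℝ) :
    B.charpoly.eval r = (r • (1 : Matrix (Fin n) (Fin n) ℝ) - B).det := by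
  rw [Matrix.charpoly, _root_.eval_det, matPolyEquiv_charmatrix]
  congr 1
  simp [Matrix.scalar, smul_eq_diagonal_mul]

lemma aux_not_integral : ¬ IsIntegral ℤ (5 / 2 : ℝ) := by
  intro h
  have h2 : (5 / 2 : ℝ) = (IsScalarTower.toAlgHom ℤ ℚ ℝ) (5 / 2 : ℚ) := by
    simp [IsScalarTower.toAlgHom]
  rw [h2, isIntegral_algHom_iff _ (algebraMap ℚ ℝ).injective] at h
  obtain ⟨y, hy⟩ := IsIntegrallyClosed.isIntegral_iff.mp h
  have : (y : ℚ) = 5 / 2 := hy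
  have h5 : (2 * y : ℤ) = 5 := by
    have := congrArg (fun x : ℚ => 2 * x) this
    norm_num at this
    exact_mod_cast this
  omega

/-- **The inflation factor of `ϱ_∞` is `5/2`, which is not an algebraic integer.**
The unique `μ ∈ (0,1)` with `Σ_{i=0}^∞ μ^{i+1} = 1` is `μ = 1/2`, so the inflation factor of
`ϱ_∞` (the case `m_i ≡ 1`) is `λ = μ + 1/μ = 5/2`.  Moreover `5/2` is not integral over `ℤ`;
in particular no non-negative integer matrix (such as the substitution matrix of a primitive
substitution on a finite alphabet) can have `5/2` as an eigenvalue, so `λ = 5/2` is not the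
inflation factor of any primitive substitution on a finite alphabet. -/
theorem inflation_factor_rho_infty :
    (∀ μ : ℝ, μ ∈ Set.Ioo (0 : ℝ) 1 → ((∑' i : ℕ, μ ^ (i + 1) = 1) ↔ μ = 1 / 2)) ∧
    (1 / 2 : ℝ) + 1 / (1 / 2 : ℝ) = 5 / 2 ∧
    ¬ IsIntegral ℤ (5 / 2 : ℝ) ∧
    ∀ (n : ℕ) (M : Matrix (Fin n) (Fin n) ℕ) (v : Fin n → ℝ),
      (Matrix.of fun i j => (M i j : ℝ)).mulVec v = (5 / 2 : ℝ) • v → v = 0 := by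
  refine ⟨?_, by norm_num, aux_not_integral, ?_⟩
  · intro μ ⟨h0, h1⟩
    have hsum : ∑' i : ℕ, μ ^ (i + 1) = μ * (1 - μ)⁻¹ := by
      have := tsum_geometric_of_lt_one h0.le h1
      rw [← this, ← tsum_mul_left]
      exact tsum_congr fun i => by ring
    rw [hsum]
    constructor
    · intro h
      have hne : (1 - μ) ≠ 0 := by linarith
      field_simp at h
      linarith
    · rintro rfl; norm_num
  · intro n M v hv
    by_contra hvne
    apply aux_not_integral
    set A : Matrix (Fin n) (Fin n) ℤ := Matrix.of fun i j => (M i j : ℤ) with hA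
    refine ⟨A.charpoly, A.charpoly_monic, ?_⟩
    show Polynomial.eval₂ (algebraMap ℤ ℝ) (5/2) A.charpoly = 0
    rw [Polynomial.eval₂_eq_eval_map, ← Matrix.charpoly_map A (algebraMap ℤ ℝ),
      aux_eval_charpoly]
    have hAM : A.map (algebraMap ℤ ℝ) = Matrix.of fun i j => (M i j : ℝ) := by
      ext i j; simp [hA]
    rw [hAM]
    rw [Matrix.exists_mulVec_eq_zero_iff.symm]
    exact ⟨v, hvne, by
      rw [Matrix.sub_mulVec, Matrix.smul_mulVec, Matrix.one_mulVec, hv, sub_self]⟩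
end

section
/- Let m : ℕ → ℕ be bounded, let μ ∈ (0,1) satisfy Σ_{i=0}^∞ m_i μ^{i+1} = 1, and set λ = μ + 1/μ. Define ν(n) = (1−μ)·μⁿ for n ∈ ℕ. Then Σ_{n=0}^∞ ν(n) = 1, λ·ν(n) = ν(n−1) + ν(n+1) for every n ≥ 1, and λ·ν(0) = Σ_{a=0}^∞ m_a·ν(a) + ν(1). (That is, ν is the normalized vector of relative letter frequencies for ϱ_m: letter n ≥ 1 occurs once in ϱ_m(n−1) and once in ϱ_m(n+1), while letter 0 occurs m_a times in ϱ_m(a) and additionally once in ϱ_m(1).) -/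
/-- **The relative letter frequencies of `ϱ_m`.**
Let `m : ℕ → ℕ` be bounded, let `μ ∈ (0,1)` satisfy `Σ_{i=0}^∞ m_i μ^{i+1} = 1`, and set
`λ = μ + 1/μ`.  Define `ν(n) = (1-μ)·μⁿ`.  Then `Σ_{n=0}^∞ ν(n) = 1`,
`λ·ν(n) = ν(n-1) + ν(n+1)` for every `n ≥ 1`, and `λ·ν(0) = Σ_{a=0}^∞ m_a·ν(a) + ν(1)`;
that is, `ν` is the normalized vector of relative letter frequencies of the substitution
`ϱ_m : 0 ↦ 0^{m₀} 1, n ↦ 0^{m_n} (n-1)(n+1)`. -/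
theorem letter_frequencies_rho_m (m : ℕ → ℕ) (C : ℕ) (hm : ∀ i, m i ≤ C)
    (μ : ℝ) (hμ : μ ∈ Set.Ioo (0 : ℝ) 1)
    (hsum : ∑' i : ℕ, (m i : ℝ) * μ ^ (i + 1) = 1)
    (lam : ℝ) (hlam : lam = μ + 1 / μ)
    (ν : ℕ → ℝ) (hν : ∀ n : ℕ, ν n = (1 - μ) * μ ^ n) :
    (∑' n : ℕ, ν n = 1) ∧
    (∀ n : ℕ, 1 ≤ n → lam * ν n = ν (n - 1) + ν (n + 1)) ∧
    lam * ν 0 = (∑' a : ℕ, (m a : ℝ) * ν a) + ν 1 := by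
  obtain ⟨hμ0, hμ1⟩ := hμ
  have hμne : μ ≠ 0 := ne_of_gt hμ0
  have habs : |μ| < 1 := by rw [abs_of_pos hμ0]; exact hμ1
  have hgeo : ∑' n : ℕ, μ ^ n = (1 - μ)⁻¹ := tsum_geometric_of_lt_one hμ0.le hμ1
  have hsummable : Summable (fun a : ℕ => (m a : ℝ) * μ ^ a) := by
    apply Summable.of_nonneg_of_le (fun a => by positivity)
      (fun a => ?_) (((summable_geometric_of_lt_one hμ0.le hμ1)).mul_left (C : ℝ))
    exact mul_le_mul_of_nonneg_right (by exact_mod_cast hm a) (by positivity)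
  have hkey : ∑' a : ℕ, (m a : ℝ) * μ ^ a = 1 / μ := by
    have : μ * ∑' a : ℕ, (m a : ℝ) * μ ^ a = 1 := by
      rw [← tsum_mul_left]
      rw [← hsum]
      congr 1; ext a; ring
    field_simp
    linarith [this]
  refine ⟨?_, ?_, ?_⟩
  · have : ∑' n : ℕ, ν n = (1 - μ) * ∑' n : ℕ, μ ^ n := by
      rw [← tsum_mul_left]; congr 1; ext n; rw [hν]
    rw [this, hgeo, mul_inv_cancel₀ (by linarith)]
  · rintro n hn
    obtain ⟨k, rfl⟩ := Nat.exists_eq_add_of_le hn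
    simp only [hν, hlam, Nat.add_sub_cancel_left, pow_add, pow_succ]
    field_simp
    ring
  · have h2 : ∑' a : ℕ, (m a : ℝ) * ν a = (1 - μ) / μ := by
      have : ∑' a : ℕ, (m a : ℝ) * ν a = (1 - μ) * ∑' a : ℕ, (m a : ℝ) * μ ^ a := by
        rw [← tsum_mul_left]; congr 1; ext a; rw [hν]; ring
      rw [this, hkey]; ring
    rw [h2, hν, hν, hlam]
    field_simp
    ring
end

section
/- The Thue–Morse sequence t : ℕ → Bool is cube-free: there exist no i ≥ 0 and p ≥ 1 such that t(i+j) = t(i+j+p) for all 0 ≤ j < 2p. Equivalently, no nonempty finite word v has vvv occurring as a factor of t. -/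
/-- The Thue–Morse sequence: `thueMorseBool n = true` iff the number of `1`s in the binary
expansion of `n` is odd. -/
def thueMorseBool (n : ℕ) : Bool := decide (Odd ((Nat.digits 2 n).count 1))

lemma tm_two_mul (n : ℕ) : thueMorseBool (2 * n) = thueMorseBool n := by
  rcases Nat.eq_zero_or_pos n with h | h
  · simp [h]
  · unfold thueMorseBool
    rw [Nat.digits_def' (by norm_num : 1 < 2) (by omega)]
    have h1 : (2 * n) % 2 = 0 := by omega
    have h2 : (2 * n) / 2 = n := by omega
    rw [h1, h2, List.count_cons]
    simp

lemma tm_two_mul_add_one (n : ℕ) : thueMorseBool (2 * n + 1) = ! thueMorseBool n := by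
  unfold thueMorseBool
  rw [Nat.digits_def' (by norm_num : 1 < 2) (by omega)]
  have h1 : (2 * n + 1) % 2 = 1 := by omega
  have h2 : (2 * n + 1) / 2 = n := by omega
  rw [h1, h2, List.count_cons, Bool.eq_iff_iff]
  simp only [beq_self_eq_true, if_true, decide_eq_true_eq, Bool.not_eq_true',
    decide_eq_false_iff_not, Nat.odd_add_one, Nat.not_odd_iff_even]

lemma tm_pair_ne (n : ℕ) : thueMorseBool (2 * n) ≠ thueMorseBool (2 * n + 1) := by
  rw [tm_two_mul, tm_two_mul_add_one]
  cases thueMorseBool n <;> simp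

lemma tm_no_three (k : ℕ) :
    ¬ (thueMorseBool k = thueMorseBool (k + 1) ∧ thueMorseBool (k + 1) = thueMorseBool (k + 2)) := by
  rintro ⟨h1, h2⟩
  rcases Nat.even_or_odd k with ⟨m, hm⟩ | ⟨m, hm⟩
  · have : k = 2 * m := by omega
    subst this
    exact tm_pair_ne m h1
  · have hk1 : k + 1 = 2 * (m + 1) := by omega
    have hk2 : k + 2 = 2 * (m + 1) + 1 := by omega
    rw [hk1, hk2] at h2
    exact tm_pair_ne (m + 1) h2

lemma tm_main : ∀ p, 1 ≤ p → ∀ i,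
    ¬ ∀ j < 2 * p, thueMorseBool (i + j) = thueMorseBool (i + j + p) := by
  intro p
  induction p using Nat.strong_induction_on with
  | _ p ih =>
    intro hp i h
    -- reformulate: for all m in the window, t m = t (m + p)
    have H : ∀ m, i ≤ m → m < i + 2 * p → thueMorseBool m = thueMorseBool (m + p) := by
      intro m hm1 hm2
      have hj : m - i < 2 * p := by omega
      have := h (m - i) hj
      have hmi : i + (m - i) = m := by omega
      rwa [hmi] at this
    rcases Nat.even_or_odd p with ⟨q, hq⟩ | ⟨q, hq⟩
    · -- p = 2q, reduce to q
      have hq1 : 1 ≤ q := by omega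
      have hpq : p = 2 * q := by omega
      refine ih q (by omega) hq1 ((i + 1) / 2) ?_
      intro j hj
      set n := (i + 1) / 2 + j with hn
      have h2n1 : i ≤ 2 * n := by omega
      have h2n2 : 2 * n < i + 2 * p := by omega
      have := H (2 * n) h2n1 h2n2
      rw [hpq] at this
      have : thueMorseBool (2 * n) = thueMorseBool (2 * (n + q)) := by
        rw [this]; ring_nf
      rw [tm_two_mul, tm_two_mul] at this
      have hgoal : (i + 1) / 2 + j + q = n + q := by omega
      rw [hgoal]
      exact this
    · -- p = 2q + 1 odd
      rcases Nat.eq_zero_or_pos q with hq0 | hq1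
      · -- p = 1 : three consecutive equal values
        have hp1 : p = 1 := by omega
        refine tm_no_three i ⟨?_, ?_⟩
        · have := h 0 (by omega); simpa [hp1] using this
        · have := h 1 (by omega)
          rw [hp1] at this
          simpa [show i + 1 + 1 = i + 2 by omega] using this
      · -- p = 2q+1, q ≥ 1, so p ≥ 3
        have hp3 : 3 ≤ p := by omega
        -- for suitable n, t(n+q) = t(n+q+1)
        have key : ∀ n, i ≤ 2 * n → 2 * n + 1 < i + 2 * p →
            thueMorseBool (n + q) = thueMorseBool (n + q + 1) := by
          intro n hn1 hn2
          have he := H (2 * n) (by omega) (by omega)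
          have ho := H (2 * n + 1) (by omega) hn2
          have he' : thueMorseBool (2 * n + p) = thueMorseBool (2 * (n + q) + 1) := by
            congr 1; omega
          have ho' : thueMorseBool (2 * n + 1 + p) = thueMorseBool (2 * (n + q + 1)) := by
            congr 1; omega
          rw [he'] at he
          rw [ho'] at ho
          rw [tm_two_mul, tm_two_mul_add_one] at he
          rw [tm_two_mul_add_one, tm_two_mul] at ho
          -- he : t n = ! t (n+q), ho : ! t n = t (n+q+1)
          rw [← ho, he]
          simp
        set n0 := (i + 1) / 2 with hn0
        have k1 := key n0 (by omega) (by omega)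
        have k2 := key (n0 + 1) (by omega) (by omega)
        refine tm_no_three (n0 + q) ⟨k1, ?_⟩
        convert k2 using 2 <;> omega

/-- **The Thue–Morse sequence is cube-free.**
There are no `i ≥ 0` and `p ≥ 1` with `t(i+j) = t(i+j+p)` for all `0 ≤ j < 2p`; equivalently,
no nonempty finite word `v` has `vvv` occurring as a factor of the Thue–Morse sequence. -/
theorem thueMorse_cubefree :
    (¬ ∃ (i p : ℕ), 1 ≤ p ∧ ∀ j < 2 * p, thueMorseBool (i + j) = thueMorseBool (i + j + p)) ∧
    (¬ ∃ (v : List Bool) (i : ℕ), v ≠ [] ∧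
      v ++ v ++ v = List.ofFn fun j : Fin (3 * v.length) => thueMorseBool (i + j)) := by
  constructor
  · rintro ⟨i, p, hp, h⟩
    exact tm_main p hp i h
  · rintro ⟨v, i, hv, heq⟩
    set p := v.length with hpdef
    have hp : 1 ≤ p := List.length_pos_iff.mpr hv
    have hlen : (v ++ v ++ v).length = 3 * p := by simp [hpdef]; ring
    apply tm_main p hp i
    intro j hj
    have hj3 : j < 3 * p := by omega
    have hjp3 : j + p < 3 * p := by omega
    have hlen2 : (List.ofFn fun j : Fin (3 * v.length) => thueMorseBool (i + j)).length
        = 3 * p := by simp [hpdef]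
    have g1 : (v ++ v ++ v)[j]? = some (thueMorseBool (i + j)) := by
      rw [heq, List.getElem?_eq_getElem (by simp only [List.length_ofFn]; omega),
        List.getElem_ofFn]
    have g2 : (v ++ v ++ v)[j + p]? = some (thueMorseBool (i + j + p)) := by
      rw [heq, List.getElem?_eq_getElem (by simp only [List.length_ofFn]; omega),
        List.getElem_ofFn]
      congr 2
      simp only [Fin.val_mk]
      omega
    -- periodicity of v ++ v ++ v
    have hleft : ∀ a, a < v.length → (v ++ v ++ v)[a]? = v[a]? := by
      intro a ha
      rw [List.getElem?_append_left (by simp only [List.length_append]; omega),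
          List.getElem?_append_left ha]
    have hmid : ∀ a, v.length ≤ a → a < 2 * v.length →
        (v ++ v ++ v)[a]? = v[a - v.length]? := by
      intro a ha1 ha2
      rw [List.getElem?_append_left (by simp only [List.length_append]; omega),
          List.getElem?_append_right ha1]
    have hright : ∀ a, 2 * v.length ≤ a → (v ++ v ++ v)[a]? = v[a - 2 * v.length]? := by
      intro a ha
      rw [List.getElem?_append_right (by simp only [List.length_append]; omega)]
      congr 1
      simp only [List.length_append]
      omega
    have hper : (v ++ v ++ v)[j]? = (v ++ v ++ v)[j + p]? := by
      rcases Nat.lt_or_ge j p with h1 | h1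
      · rw [hleft j (by omega), hmid (j + p) (by omega) (by omega)]
        congr 1
        omega
      · rw [hmid j (by omega) (by omega), hright (j + p) (by omega)]
        congr 1
        omega
    rw [g1, g2] at hper
    exact Option.some.inj hper
end
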